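/- Let h(x) = Σ_{j=1}^n C_j (x − d_j)₊ with C_j ≥ 0, 0 ≤ d_1 ≤ … ≤ d_n, Σ C_j ≤ 1. Then for a non-negative random variable X with survival function S_X and distortion function g, ϱ_g(h(X)) = Σ_{j=1}^n C_j ∫_{d_j}^∞ g(S_X(x)) dx. -/

import Mathlib

open MeasureTheory Set Finset

/-- For `h(x) = Σ_j C_j (x − d_j)₊` with `C_j ≥ 0`, ordered `d_j ≥ 0` and
`Σ C_j ≤ 1`, the distortion risk measure of `h(X)` is
`Σ_j C_j ∫_{d_j}^∞ g(S_X(x)) dx`. -/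
theorem distortion_of_combination
    {Ω : Type*} [MeasureSpace Ω] [IsProbabilityMeasure (volume : Measure Ω)]
    (X : Ω → ℝ) (hXmeas : Measurable X) (hXnonneg : ∀ ω, 0 ≤ X ω)
    (g : ℝ → ℝ) (hgmono : MonotoneOn g (Icc 0 1)) (hg0 : g 0 = 0) (hg1 : g 1 = 1)
    (hint : IntegrableOn (fun x => g ((volume {ω | x < X ω}).toReal)) (Ioi 0))
    (n : ℕ) (C d : Fin n → ℝ)
    (hC : ∀ j, 0 ≤ C j) (hd0 : ∀ j, 0 ≤ d j) (hdmono : Monotone d)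
    (hCsum : ∑ j, C j ≤ 1) :
    ∫ y in Ioi (0:ℝ),
        g ((volume {ω | y < ∑ j, C j * max (X ω - d j) 0}).toReal)
      = ∑ j, C j * ∫ x in Ioi (d j), g ((volume {ω | x < X ω}).toReal) := by
  classical
  set F : ℝ → ℝ := fun x => g ((volume {ω | x < X ω}).toReal) with hFdef
  set H : ℝ → ℝ := fun x => ∑ j, C j * max (x - d j) 0 with hHdef
  by_cases hCzero : ∀ j, C j = 0
  · have h1 : ∀ y ∈ Ioi (0:ℝ),
        g ((volume {ω | y < ∑ j, C j * max (X ω - d j) 0}).toReal) = 0 := by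
      intro y hy
      have hsum : ∀ ω, (∑ j, C j * max (X ω - d j) 0) = 0 := fun ω =>
        Finset.sum_eq_zero fun j _ => by rw [hCzero j, zero_mul]
      have hset : {ω | y < ∑ j, C j * max (X ω - d j) 0} = (∅ : Set Ω) := by
        ext ω
        simp only [mem_setOf_eq, hsum ω, mem_empty_iff_false, iff_false, not_lt]
        exact le_of_lt (mem_Ioi.mp hy)
      rw [hset]
      simp [hg0]
    rw [setIntegral_congr_fun measurableSet_Ioi h1]
    simp [hCzero]
  · push_neg at hCzero
    -- choose the index with minimal threshold among nonzero coefficients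
    obtain ⟨j0, hj0⟩ := hCzero
    obtain ⟨js, hjs_mem, hjs_min⟩ :=
      Finset.exists_min_image (Finset.univ.filter (fun j => C j ≠ 0)) d
        ⟨j0, by simp [hj0]⟩
    have hCjs : C js ≠ 0 := (Finset.mem_filter.mp hjs_mem).2
    have hCjs_pos : 0 < C js := lt_of_le_of_ne (hC js) (Ne.symm hCjs)
    set a : ℝ := d js with hadef
    have ha0 : 0 ≤ a := hd0 js
    have hmin : ∀ j, C j ≠ 0 → a ≤ d j := fun j hj =>
      hjs_min j (by simp [hj])
    set W : ℝ → ℝ := fun x => ∑ j, if d j < x then C j else 0 with hWdef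
    -- basic properties of H
    have Hmono : Monotone H := by
      intro x y hxy
      apply Finset.sum_le_sum
      intro j _
      exact mul_le_mul_of_nonneg_left
        (max_le_max (by linarith) le_rfl) (hC j)
    have Hsm : StrictMonoOn H (Ici a) := by
      intro x hx y hy hxy
      apply Finset.sum_lt_sum
      · intro j _
        exact mul_le_mul_of_nonneg_left
          (max_le_max (by linarith) le_rfl) (hC j)
      · refine ⟨js, Finset.mem_univ _, ?_⟩
        have hx' : max (x - d js) 0 = x - a := by
          rw [← hadef, max_eq_left (by simpa [sub_nonneg] using hx)]
        have hy' : max (y - d js) 0 = y - a := by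
          rw [← hadef, max_eq_left (by simpa [sub_nonneg] using hy)]
        rw [hx', hy']
        exact mul_lt_mul_of_pos_left (by linarith) hCjs_pos
    have Hcont : Continuous H := by
      apply continuous_finset_sum
      intro j _
      exact continuous_const.mul
        ((continuous_id.sub continuous_const).max continuous_const)
    have Ha : ∀ x ≤ a, H x = 0 := by
      intro x hx
      apply Finset.sum_eq_zero
      intro j _
      by_cases hCj : C j = 0
      · simp [hCj]
      · have := hmin j hCj
        rw [max_eq_right (by linarith)]
        ring
    have Wzero : ∀ x ≤ a, W x = 0 := by
      intro x hx
      apply Finset.sum_eq_zero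
      intro j _
      by_cases hCj : C j = 0
      · simp [hCj]
      · have := hmin j hCj
        rw [if_neg (by linarith)]
    have Wnonneg : ∀ x, 0 ≤ W x := by
      intro x
      apply Finset.sum_nonneg
      intro j _
      split
      · exact hC j
      · exact le_rfl
    -- image of (a, ∞) under H is (0, ∞)
    have Himg : H '' (Set.Ioi a) = Set.Ioi 0 := by
      apply Set.Subset.antisymm
      · rintro y ⟨x, hx, rfl⟩
        have := Hsm (self_mem_Ici) (Set.mem_Ici.mpr (le_of_lt hx)) hx
        rw [Ha a le_rfl] at this
        exact this
      · intro y hy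
        have hy' : (0:ℝ) < y := hy
        have hdiv : 0 ≤ y / C js := div_nonneg (le_of_lt hy') (le_of_lt hCjs_pos)
        have hMa : a ≤ a + y / C js + 1 := by linarith
        have hHM : y ≤ H (a + y / C js + 1) := by
          have hterm : C js * max (a + y / C js + 1 - d js) 0 ≤ H (a + y / C js + 1) := by
            apply Finset.single_le_sum
              (f := fun j => C j * max (a + y / C js + 1 - d j) 0)
              (fun j _ => mul_nonneg (hC j) (le_max_right _ _)) (Finset.mem_univ js)
          have hM' : max (a + y / C js + 1 - d js) 0 = y / C js + 1 := by
            rw [← hadef, max_eq_left (by linarith)]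
            ring
          rw [hM'] at hterm
          have hfs : C js * (y / C js + 1) = y + C js := by
            field_simp
          rw [hfs] at hterm
          linarith
        obtain ⟨x, hxmem, hxval⟩ :=
          intermediate_value_Icc hMa Hcont.continuousOn
            (show y ∈ Icc (H a) (H (a + y / C js + 1)) by
              rw [Ha a le_rfl]; exact ⟨le_of_lt hy', hHM⟩)
        have hxa : a < x := by
          rcases lt_or_eq_of_le hxmem.1 with h | h
          · exact h
          · exfalso; rw [← h, Ha a le_rfl] at hxval; exact absurd hxval.symm (ne_of_gt hy')
        exact ⟨x, hxa, hxval⟩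
    have Hinj : InjOn H (Ioi a) :=
      (Hsm.mono (Ioi_subset_Ici le_rfl)).injOn
    -- the good set s
    set s : Set ℝ := Ioi a \ Set.range d with hsdef
    have hs_meas : MeasurableSet s :=
      measurableSet_Ioi.diff (Set.finite_range d).measurableSet
    -- derivative of H on s
    have hderiv : ∀ x ∈ s, HasDerivAt H (W x) x := by
      intro x hx
      have hxne : ∀ j, x ≠ d j := fun j h => hx.2 ⟨j, h.symm⟩
      apply HasDerivAt.fun_sum
      intro j _
      rcases lt_or_gt_of_ne (hxne j) with h | h
      · have heq : (fun y => C j * max (y - d j) 0) =ᶠ[nhds x] fun _ => (0:ℝ) := by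
          filter_upwards [Iio_mem_nhds h] with y (hy : y < d j)
          rw [max_eq_right (by linarith), mul_zero]
        rw [if_neg (not_lt.mpr h.le)]
        exact (hasDerivAt_const x (0:ℝ)).congr_of_eventuallyEq heq
      · have heq : (fun y => C j * max (y - d j) 0) =ᶠ[nhds x] fun y => C j * (y - d j) := by
          filter_upwards [Ioi_mem_nhds h] with y (hy : d j < y)
          rw [max_eq_left (by linarith)]
        have hd' : HasDerivAt (fun y => C j * (y - d j)) (C j) x := by
          simpa using ((hasDerivAt_id x).sub_const (d j)).const_mul (C j)
        rw [if_pos h]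
        exact hd'.congr_of_eventuallyEq heq
    -- survival set identity
    have hset : ∀ x ∈ s, {ω | H x < H (X ω)} = {ω | x < X ω} := by
      intro x hx
      ext ω
      simp only [mem_setOf_eq]
      constructor
      · intro h
        by_contra hc
        push_neg at hc
        exact absurd (Hmono hc) (not_le.mpr h)
      · intro h
        exact Hsm (Set.mem_Ici.mpr (le_of_lt hx.1)) (Set.mem_Ici.mpr (le_of_lt (hx.1.trans h))) h
    -- a.e. equality of H '' s and Ioi 0
    have hae : H '' s =ᵐ[volume] Ioi (0:ℝ) := by
      rw [ae_eq_set]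
      constructor
      · have hsub : H '' s ⊆ Ioi 0 := by
          rw [← Himg]; exact Set.image_mono diff_subset
        rw [diff_eq_empty.mpr hsub]
        exact measure_empty
      · have hsub : Ioi (0:ℝ) \ H '' s ⊆ H '' (Set.range d) := by
          intro y hy
          have hy1 : y ∈ H '' (Set.Ioi a) := by rw [Himg]; exact hy.1
          obtain ⟨x, hx, rfl⟩ := hy1
          by_cases hxr : x ∈ Set.range d
          · exact ⟨x, hxr, rfl⟩
          · exact absurd ⟨x, ⟨hx, hxr⟩, rfl⟩ hy.2
        exact measure_mono_null hsub
          (((Set.finite_range d).image H).measure_zero volume)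
    -- chain of equalities
    have e1 : (∫ y in Ioi (0:ℝ),
          g ((volume {ω | y < ∑ j, C j * max (X ω - d j) 0}).toReal))
        = ∫ y in H '' s, g ((volume {ω | y < H (X ω)}).toReal) := by
      refine (setIntegral_congr_set hae).symm
    have e2 : (∫ y in H '' s, g ((volume {ω | y < H (X ω)}).toReal))
        = ∫ x in s, |W x| • g ((volume {ω | H x < H (X ω)}).toReal) :=
      integral_image_eq_integral_abs_deriv_smul hs_meas
        (fun x hx => (hderiv x hx).hasDerivWithinAt)
        (Hinj.mono diff_subset) _
    have e3 : (∫ x in s, |W x| • g ((volume {ω | H x < H (X ω)}).toReal))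
        = ∫ x in s, W x * F x := by
      apply setIntegral_congr_fun hs_meas
      intro x hx
      show |W x| • g ((volume {ω | H x < H (X ω)}).toReal) = W x * F x
      rw [hset x hx, abs_of_nonneg (Wnonneg x), smul_eq_mul]
    have e4 : (∫ x in s, W x * F x) = ∫ x in Ioi a, W x * F x := by
      apply setIntegral_congr_set
      rw [ae_eq_set]
      refine ⟨by rw [diff_eq_empty.mpr diff_subset]; exact measure_empty, ?_⟩
      refine measure_mono_null (fun x hx => ?_)
        ((Set.finite_range d).measure_zero volume)
      by_contra hxr
      exact hx.2 ⟨hx.1, hxr⟩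
    have e5 : (∫ x in Ioi a, W x * F x) = ∫ x in Ioi (0:ℝ), W x * F x := by
      rw [← integral_indicator measurableSet_Ioi, ← integral_indicator measurableSet_Ioi]
      congr 1
      funext x
      by_cases hx : a < x
      · rw [Set.indicator_of_mem (Set.mem_Ioi.mpr hx),
          Set.indicator_of_mem (Set.mem_Ioi.mpr (lt_of_le_of_lt ha0 hx))]
      · rw [Set.indicator_of_notMem (fun hm => hx (Set.mem_Ioi.mp hm))]
        by_cases hx0 : (0:ℝ) < x
        · rw [Set.indicator_of_mem (Set.mem_Ioi.mpr hx0), Wzero x (not_lt.mp hx), zero_mul]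
        · rw [Set.indicator_of_notMem (fun hm => hx0 (Set.mem_Ioi.mp hm))]
    have hintj : ∀ j : Fin n, IntegrableOn (fun x => C j * F x) (Ioi (d j)) := by
      intro j
      exact (hint.mono_set (Ioi_subset_Ioi (hd0 j))).const_mul (C j)
    have e6 : (∫ x in Ioi (0:ℝ), W x * F x)
        = ∑ j, C j * ∫ x in Ioi (d j), F x := by
      have hWF : ∀ x, W x * F x
          = ∑ j, Set.indicator (Ioi (d j)) (fun x => C j * F x) x := by
        intro x
        rw [hWdef]
        simp only [Finset.sum_mul]
        apply Finset.sum_congr rfl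
        intro j _
        by_cases h : d j < x
        · rw [if_pos h, Set.indicator_of_mem (Set.mem_Ioi.mpr h)]
        · rw [if_neg h, Set.indicator_of_notMem (fun hm => h (Set.mem_Ioi.mp hm)), zero_mul]
      simp only [hWF]
      rw [integral_finset_sum _ (fun j _ =>
        ((hintj j).integrable_indicator measurableSet_Ioi).integrableOn)]
      apply Finset.sum_congr rfl
      intro j _
      rw [setIntegral_indicator measurableSet_Ioi,
        Set.Ioi_inter_Ioi, max_eq_right (hd0 j), integral_const_mul]
    rw [e1, e2, e3, e4, e5, e6]
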